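/- arXiv:2110.00852 — 4 statements merged into one kernel-verified Lean document; each statement's English description precedes it below -/
import Mathlib

section
/- Let 𝒳 ∈ ℂ^{n×p}, 𝒴 ∈ ℂ^n, W ∈ ℂ^p, λ > 0, and suppose λ ≥ (2/n)‖𝒳^H(𝒴 − 𝒳W)‖_∞. Let Ŵ be any minimizer of F(β) = (1/(2n))‖𝒴 − 𝒳β‖₂² + λ‖β‖₁ over β ∈ ℂ^p, and set Δ̂ = Ŵ − W. Let M = {v ∈ ℂ^p : v[j] = 0 whenever W[j] = 0} and M^⊥ = {v : v[j] = 0 whenever W[j] ≠ 0}. Then ‖Δ̂_{M^⊥}‖₁ ≤ 3‖Δ̂_M‖₁, where Δ̂_M and Δ̂_{M^⊥} are the coordinate projections of Δ̂ onto the support and off-support of W. -/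
open Matrix Finset

theorem stmt_3 (n p : ℕ) (hn : 0 < n)
    (X : Matrix (Fin n) (Fin p) ℂ) (Y : Fin n → ℂ) (W : Fin p → ℂ)
    (lam : ℝ) (hlam : 0 < lam)
    (hlam_ge : ∀ j : Fin p, (2 / n) * ‖(Xᴴ.mulVec (Y - X.mulVec W)) j‖ ≤ lam)
    (What : Fin p → ℂ)
    (hmin : ∀ β : Fin p → ℂ,
      (1 / (2 * n)) * ∑ i, ‖(Y - X.mulVec What) i‖ ^ 2 + lam * ∑ j, ‖What j‖ ≤
      (1 / (2 * n)) * ∑ i, ‖(Y - X.mulVec β) i‖ ^ 2 + lam * ∑ j, ‖β j‖) :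
    ∑ j ∈ univ.filter (fun j => W j = 0), ‖What j - W j‖ ≤
      3 * ∑ j ∈ univ.filter (fun j => W j ≠ 0), ‖What j - W j‖ := by
  have hnR : (0:ℝ) < n := by exact_mod_cast hn
  set Δ : Fin p → ℂ := What - W with hΔ
  set r : Fin n → ℂ := Y - X.mulVec W with hr
  set s : Fin n → ℂ := X.mulVec Δ with hs
  set g : Fin p → ℂ := Xᴴ.mulVec r with hg
  set B : ℝ := ∑ j ∈ univ.filter (fun j => W j = 0), ‖What j - W j‖ with hB
  set A : ℝ := ∑ j ∈ univ.filter (fun j => W j ≠ 0), ‖What j - W j‖ with hA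
  have hfun : Y - X.mulVec What = r - s := by
    rw [hs, hΔ, Matrix.mulVec_sub, hr]; abel
  have h1 := hmin W
  rw [← hr, hfun] at h1
  -- pointwise square expansion
  have pl : ∀ a b : ℂ, ‖a - b‖ ^ 2 = ‖a‖ ^ 2 - 2 * ((starRingEnd ℂ) a * b).re + ‖b‖ ^ 2 := by
    intro a b
    simp only [Complex.sq_norm, Complex.normSq_apply, Complex.sub_re,
      Complex.sub_im, Complex.mul_re, Complex.mul_im, Complex.conj_re, Complex.conj_im]
    ring
  have key : ∑ i, ‖(r - s) i‖ ^ 2 =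
      ∑ i, ‖r i‖ ^ 2 - 2 * (∑ i, (starRingEnd ℂ) (r i) * s i).re + ∑ i, ‖s i‖ ^ 2 := by
    rw [Complex.re_sum, Finset.mul_sum, ← Finset.sum_sub_distrib, ← Finset.sum_add_distrib]
    apply Finset.sum_congr rfl
    intro i _
    simp only [Pi.sub_apply]
    rw [pl]
  have swap : ∑ i, (starRingEnd ℂ) (r i) * s i = ∑ j, (starRingEnd ℂ) (g j) * Δ j := by
    simp only [hs, hg, Matrix.mulVec, dotProduct, Matrix.conjTranspose_apply, map_sum,
      Finset.mul_sum, Finset.sum_mul]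
    rw [Finset.sum_comm]
    apply Finset.sum_congr rfl; intro j _
    apply Finset.sum_congr rfl; intro i _
    simp only [map_mul (starRingEnd ℂ), starRingEnd_apply, star_star]
    ring
  have reb : (∑ j, (starRingEnd ℂ) (g j) * Δ j).re ≤ ∑ j, ‖g j‖ * ‖Δ j‖ := by
    rw [Complex.re_sum]
    apply Finset.sum_le_sum
    intro j _
    calc ((starRingEnd ℂ) (g j) * Δ j).re ≤ ‖(starRingEnd ℂ) (g j) * Δ j‖ :=
          Complex.re_le_norm _
      _ = ‖g j‖ * ‖Δ j‖ := by rw [norm_mul, Complex.norm_conj]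
  have hs2 : (0:ℝ) ≤ ∑ i, ‖s i‖ ^ 2 :=
    Finset.sum_nonneg fun i _ => sq_nonneg _
  -- split the l1 norm of Δ
  have hsplit : ∑ j, ‖Δ j‖ = B + A := by
    rw [hB, hA, ← Finset.sum_filter_add_sum_filter_not univ (fun j => W j = 0) (fun j => ‖Δ j‖)]
    simp [hΔ]
  -- bound on RHS
  have hub : ∑ j, ‖g j‖ * ‖Δ j‖ ≤ (lam * n / 2) * ∑ j, ‖Δ j‖ := by
    rw [Finset.mul_sum]
    apply Finset.sum_le_sum
    intro j _
    have h := hlam_ge j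
    have hd : (0:ℝ) ≤ ‖Δ j‖ := norm_nonneg _
    have : ‖g j‖ ≤ lam * n / 2 := by
      rw [div_mul_eq_mul_div, div_le_iff₀ hnR] at h
      linarith
    exact mul_le_mul_of_nonneg_right this hd
  -- decomposability lower bound
  have lower : B - A ≤ ∑ j, ‖What j‖ - ∑ j, ‖W j‖ := by
    have e1 : ∑ j, ‖What j‖ = (∑ j ∈ univ.filter (fun j => W j = 0), ‖What j‖)
        + ∑ j ∈ univ.filter (fun j => W j ≠ 0), ‖What j‖ :=
      (Finset.sum_filter_add_sum_filter_not univ _ _).symm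
    have e2 : ∑ j, ‖W j‖ = (∑ j ∈ univ.filter (fun j => W j = 0), ‖W j‖)
        + ∑ j ∈ univ.filter (fun j => W j ≠ 0), ‖W j‖ :=
      (Finset.sum_filter_add_sum_filter_not univ _ _).symm
    have e3 : ∑ j ∈ univ.filter (fun j => W j = 0), ‖W j‖ = 0 := by
      apply Finset.sum_eq_zero
      intro j hj
      simp only [Finset.mem_filter] at hj
      simp [hj.2]
    have e4 : B = ∑ j ∈ univ.filter (fun j => W j = 0), ‖What j‖ := by
      rw [hB]
      apply Finset.sum_congr rfl
      intro j hj
      simp only [Finset.mem_filter] at hj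
      rw [hj.2, sub_zero]
    have e5 : ∑ j ∈ univ.filter (fun j => W j ≠ 0), ‖W j‖ - A
        ≤ ∑ j ∈ univ.filter (fun j => W j ≠ 0), ‖What j‖ := by
      rw [hA, ← Finset.sum_sub_distrib]
      apply Finset.sum_le_sum
      intro j _
      have := norm_sub_norm_le (W j) (What j)
      rw [norm_sub_rev] at this
      linarith
    rw [e1, e2, e3, e4]
    linarith
  -- combine
  have main : lam * (∑ j, ‖What j‖ - ∑ j, ‖W j‖) ≤ (lam / 2) * (B + A) := by
    have h2 : lam * (∑ j, ‖What j‖ - ∑ j, ‖W j‖)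
        ≤ (1 / (2 * n)) * (∑ i, ‖r i‖ ^ 2 - ∑ i, ‖(r - s) i‖ ^ 2) := by
      have hpos : (0:ℝ) < 1 / (2 * n) := by positivity
      nlinarith [h1]
    have h3 : (1 / (2 * n)) * (∑ i, ‖r i‖ ^ 2 - ∑ i, ‖(r - s) i‖ ^ 2)
        ≤ (1 / n) * (∑ j, ‖g j‖ * ‖Δ j‖) := by
      rw [key, swap]
      have hid : ∀ a T S : ℝ, 1 / (2 * (n:ℝ)) * (a - (a - 2 * T + S)) =
          (1 / n) * T - (1 / (2 * n)) * S := by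
        intro a T S; field_simp; ring
      rw [hid]
      have h1 : (1 / (n:ℝ)) * (∑ j, (starRingEnd ℂ) (g j) * Δ j).re
          ≤ (1 / n) * (∑ j, ‖g j‖ * ‖Δ j‖) := by
        apply mul_le_mul_of_nonneg_left reb; positivity
      have h2 : (0:ℝ) ≤ (1 / (2 * n)) * ∑ i, ‖s i‖ ^ 2 := by positivity
      linarith
    have h4 : (1 / n) * (∑ j, ‖g j‖ * ‖Δ j‖) ≤ (lam / 2) * (B + A) := by
      rw [← hsplit]
      have : (1 / (n:ℝ)) * ((lam * n / 2) * ∑ j, ‖Δ j‖) = (lam / 2) * ∑ j, ‖Δ j‖ := by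
        field_simp
      calc (1 / (n:ℝ)) * (∑ j, ‖g j‖ * ‖Δ j‖) ≤ (1 / n) * ((lam * n / 2) * ∑ j, ‖Δ j‖) := by
            apply mul_le_mul_of_nonneg_left hub; positivity
        _ = (lam / 2) * ∑ j, ‖Δ j‖ := this
    linarith
  have final : lam * (B - A) ≤ (lam / 2) * (B + A) := by
    calc lam * (B - A) ≤ lam * (∑ j, ‖What j‖ - ∑ j, ‖W j‖) :=
          mul_le_mul_of_nonneg_left lower (le_of_lt hlam)
      _ ≤ (lam / 2) * (B + A) := main
  nlinarith [final, hlam]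
end

section
/- Let 𝒳 ∈ ℂ^{n×p}, 𝒴 ∈ ℂ^n, W ∈ ℂ^p with support of size at most d, and λ, κ > 0. Suppose (i) λ ≥ (2/n)‖𝒳^H(𝒴 − 𝒳W)‖_∞ and (ii) (1/n)‖𝒳Δ‖₂² ≥ κ‖Δ‖₂² for all Δ in the cone D = {Δ ∈ ℂ^p : ‖Δ_{M^⊥}‖₁ ≤ 3‖Δ_M‖₁}, where M is the support subspace of W. Then any minimizer Ŵ of (1/(2n))‖𝒴 − 𝒳β‖₂² + λ‖β‖₁ satisfies ‖Ŵ − W‖₂ ≤ (3/κ)λ√d. -/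
open Matrix Finset

theorem stmt_4 (n p d : ℕ) (hn : 0 < n)
    (X : Matrix (Fin n) (Fin p) ℂ) (Y : Fin n → ℂ) (W : Fin p → ℂ)
    (hsupp : (univ.filter (fun j => W j ≠ 0)).card ≤ d)
    (lam κ : ℝ) (hlam : 0 < lam) (hκ : 0 < κ)
    (hlam_ge : ∀ j : Fin p, (2 / n) * ‖(Xᴴ.mulVec (Y - X.mulVec W)) j‖ ≤ lam)
    (hRE : ∀ Δ : Fin p → ℂ,
      (∑ j ∈ univ.filter (fun j => W j = 0), ‖Δ j‖ ≤
        3 * ∑ j ∈ univ.filter (fun j => W j ≠ 0), ‖Δ j‖) →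
      κ * ∑ j, ‖Δ j‖ ^ 2 ≤ (1 / n) * ∑ i, ‖(X.mulVec Δ) i‖ ^ 2)
    (What : Fin p → ℂ)
    (hmin : ∀ β : Fin p → ℂ,
      (1 / (2 * n)) * ∑ i, ‖(Y - X.mulVec What) i‖ ^ 2 + lam * ∑ j, ‖What j‖ ≤
      (1 / (2 * n)) * ∑ i, ‖(Y - X.mulVec β) i‖ ^ 2 + lam * ∑ j, ‖β j‖) :
    Real.sqrt (∑ j, ‖What j - W j‖ ^ 2) ≤ (3 / κ) * lam * Real.sqrt d := by
  classical
  have hn' : (0 : ℝ) < n := by exact_mod_cast hn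
  set Δ : Fin p → ℂ := fun j => What j - W j with hΔdef
  set r : Fin n → ℂ := Y - X.mulVec W with hrdef
  set g : Fin p → ℂ := Xᴴ.mulVec r with hgdef
  set S : Finset (Fin p) := univ.filter (fun j => W j ≠ 0) with hSdef
  set Sc : Finset (Fin p) := univ.filter (fun j => W j = 0) with hScdef
  set A : ℝ := ∑ i, ‖(X.mulVec Δ) i‖ ^ 2 with hAdef
  set T : ℝ := ∑ j, (g j * (starRingEnd ℂ) (Δ j)).re with hTdef
  set L1S : ℝ := ∑ j ∈ S, ‖Δ j‖ with hL1Sdef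
  set L1c : ℝ := ∑ j ∈ Sc, ‖Δ j‖ with hL1cdef
  set B : ℝ := ∑ j, ‖Δ j‖ ^ 2 with hBdef
  have hWhat : What = fun j => W j + Δ j := by funext j; simp [hΔdef]
  -- residual expansion
  have hres : ∀ i, (Y - X.mulVec What) i = r i - (X.mulVec Δ) i := by
    intro i
    have : X.mulVec What = X.mulVec W + X.mulVec Δ := by
      rw [hWhat]
      rw [show (fun j => W j + Δ j) = W + Δ from rfl, Matrix.mulVec_add]
    simp [this, hrdef, Pi.sub_apply, Pi.add_apply]
    ring
  have hsq : ∀ a b : ℂ, ‖a - b‖ ^ 2 = ‖a‖ ^ 2 - 2 * (a * (starRingEnd ℂ) b).re + ‖b‖ ^ 2 := by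
    intro a b
    simp only [Complex.sq_norm, Complex.normSq_sub]
    ring
  have hexp : ∑ i, ‖(Y - X.mulVec What) i‖ ^ 2
      = ∑ i, ‖r i‖ ^ 2 - 2 * (∑ i, (r i * (starRingEnd ℂ) ((X.mulVec Δ) i)).re) + A := by
    have h1 : ∀ i ∈ (univ : Finset (Fin n)), ‖(Y - X.mulVec What) i‖ ^ 2
        = ‖r i‖ ^ 2 - 2 * (r i * (starRingEnd ℂ) ((X.mulVec Δ) i)).re
          + ‖(X.mulVec Δ) i‖ ^ 2 := fun i _ => by rw [hres i, hsq]
    rw [Finset.sum_congr rfl h1, Finset.sum_add_distrib, Finset.sum_sub_distrib,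
      ← Finset.mul_sum, hAdef]
  -- cross term identity
  have hcross : ∑ i, (r i * (starRingEnd ℂ) ((X.mulVec Δ) i)).re
      = ∑ j, (g j * (starRingEnd ℂ) (Δ j)).re := by
    have hC : ∑ i, r i * (starRingEnd ℂ) ((X.mulVec Δ) i)
        = ∑ j, g j * (starRingEnd ℂ) (Δ j) := by
      simp only [hgdef, Matrix.mulVec, dotProduct, Matrix.conjTranspose_apply,
        map_sum, _root_.map_mul, starRingEnd_apply, star_sum, star_mul', Finset.mul_sum, Finset.sum_mul]
      rw [Finset.sum_comm]
      refine Finset.sum_congr rfl fun i _ => Finset.sum_congr rfl fun j _ => ?_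
      ring
    calc ∑ i, (r i * (starRingEnd ℂ) ((X.mulVec Δ) i)).re
        = (∑ i, r i * (starRingEnd ℂ) ((X.mulVec Δ) i)).re := by
          rw [Complex.re_sum]
      _ = (∑ j, g j * (starRingEnd ℂ) (Δ j)).re := by rw [hC]
      _ = ∑ j, (g j * (starRingEnd ℂ) (Δ j)).re := by rw [Complex.re_sum]
  -- basic inequality from minimality
  have hmain : A - 2 * T ≤ 2 * n * lam * (∑ j, ‖W j‖ - ∑ j, ‖What j‖) := by
    have h0 := hmin W
    rw [hexp, hcross] at h0
    have h2n : (0 : ℝ) < 2 * n := by linarith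
    have hh : (1 / (2 * (n:ℝ))) * (∑ i, ‖r i‖ ^ 2) + (1 / (2 * n)) * (A - 2 * T)
        + lam * ∑ j, ‖What j‖ ≤ (1 / (2 * n)) * (∑ i, ‖r i‖ ^ 2) + lam * ∑ j, ‖W j‖ := by
      have hring : (1 / (2 * (n:ℝ))) * (∑ i, ‖r i‖ ^ 2 - 2 * T + A)
          = (1 / (2 * n)) * (∑ i, ‖r i‖ ^ 2) + (1 / (2 * n)) * (A - 2 * T) := by ring
      calc (1 / (2 * (n:ℝ))) * (∑ i, ‖r i‖ ^ 2) + (1 / (2 * n)) * (A - 2 * T)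
            + lam * ∑ j, ‖What j‖
          = (1 / (2 * n)) * (∑ i, ‖r i‖ ^ 2 - 2 * T + A) + lam * ∑ j, ‖What j‖ := by
            rw [hring]
        _ ≤ (1 / (2 * n)) * (∑ i, ‖r i‖ ^ 2) + lam * ∑ j, ‖W j‖ := h0
    have hstep : (1 / (2 * (n:ℝ))) * (A - 2 * T)
        ≤ lam * ∑ j, ‖W j‖ - lam * ∑ j, ‖What j‖ := by linarith
    have h2 : (2 * (n:ℝ)) * ((1 / (2 * n)) * (A - 2 * T)) = A - 2 * T := by
      field_simp
    calc A - 2 * T = (2 * (n:ℝ)) * ((1 / (2 * n)) * (A - 2 * T)) := h2.symm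
      _ ≤ (2 * n) * (lam * ∑ j, ‖W j‖ - lam * ∑ j, ‖What j‖) :=
          mul_le_mul_of_nonneg_left hstep (le_of_lt h2n)
      _ = 2 * n * lam * (∑ j, ‖W j‖ - ∑ j, ‖What j‖) := by ring
  -- bound on T
  have hT : T ≤ (n * lam / 2) * (L1S + L1c) := by
    have hsplit : L1c + L1S = ∑ j, ‖Δ j‖ := by
      rw [hL1cdef, hL1Sdef, hScdef, hSdef]
      exact Finset.sum_filter_add_sum_filter_not univ (fun j => W j = 0) (fun j => ‖Δ j‖)
    have : T ≤ ∑ j, (n * lam / 2) * ‖Δ j‖ := by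
      refine Finset.sum_le_sum fun j _ => ?_
      have h1 : (g j * (starRingEnd ℂ) (Δ j)).re ≤ ‖g j‖ * ‖Δ j‖ := by
        calc (g j * (starRingEnd ℂ) (Δ j)).re ≤ ‖g j * (starRingEnd ℂ) (Δ j)‖ :=
            Complex.re_le_norm _
          _ = ‖g j‖ * ‖Δ j‖ := by rw [norm_mul, Complex.norm_conj]
      have h2 : ‖g j‖ ≤ n * lam / 2 := by
        have h3 := hlam_ge j
        have h4 : ((n:ℝ) / 2) * ((2 / n) * ‖g j‖) = ‖g j‖ := by field_simp
        calc ‖g j‖ = ((n:ℝ) / 2) * ((2 / n) * ‖g j‖) := h4.symm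
          _ ≤ ((n:ℝ) / 2) * lam := mul_le_mul_of_nonneg_left h3 (by positivity)
          _ = n * lam / 2 := by ring
      calc (g j * (starRingEnd ℂ) (Δ j)).re ≤ ‖g j‖ * ‖Δ j‖ := h1
        _ ≤ (n * lam / 2) * ‖Δ j‖ := by
            exact mul_le_mul_of_nonneg_right h2 (norm_nonneg _)
    rw [← Finset.mul_sum, ← hsplit] at this
    linarith
  -- bound on the l1 difference
  have hl1 : ∑ j, ‖W j‖ - ∑ j, ‖What j‖ ≤ L1S - L1c := by
    have hW1 : ∑ j, ‖W j‖ = ∑ j ∈ S, ‖W j‖ := by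
      rw [hSdef]
      symm
      apply Finset.sum_filter_of_ne
      intro j _ h
      exact fun h0 => h (by simp [h0])
    have hWhat1 : ∑ j, ‖What j‖ = ∑ j ∈ S, ‖What j‖ + L1c := by
      rw [hL1cdef]
      have := Finset.sum_filter_add_sum_filter_not univ (fun j => W j ≠ 0) (fun j => ‖What j‖)
      have hSc' : univ.filter (fun j => ¬ W j ≠ 0) = Sc := by
        rw [hScdef]; congr 1; funext j; simp
      rw [hSc'] at this
      have hcongr : ∑ j ∈ Sc, ‖What j‖ = ∑ j ∈ Sc, ‖Δ j‖ := by
        refine Finset.sum_congr rfl fun j hj => ?_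
        rw [hScdef] at hj
        have hj0 : W j = 0 := (Finset.mem_filter.mp hj).2
        rw [hΔdef]; simp [hj0]
      rw [← this, hcongr, hSdef]
    have hS1 : ∑ j ∈ S, ‖W j‖ - ∑ j ∈ S, ‖What j‖ ≤ L1S := by
      rw [hL1Sdef, ← Finset.sum_sub_distrib]
      refine Finset.sum_le_sum fun j _ => ?_
      calc ‖W j‖ - ‖What j‖ ≤ ‖W j - What j‖ := norm_sub_norm_le _ _
        _ = ‖Δ j‖ := by rw [hΔdef]; simp only [← norm_neg (W j - What j)]; congr 1; ring
    rw [hW1, hWhat1]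
    linarith
  -- combine: A ≤ n*lam*(3*L1S - L1c)
  have hA : A ≤ n * lam * (3 * L1S - L1c) := by
    have hl1' : 2 * (n:ℝ) * lam * (∑ j, ‖W j‖ - ∑ j, ‖What j‖)
        ≤ 2 * (n:ℝ) * lam * (L1S - L1c) :=
      mul_le_mul_of_nonneg_left hl1 (by positivity)
    nlinarith [hmain, hT, hl1']
  have hA0 : 0 ≤ A := Finset.sum_nonneg fun i _ => sq_nonneg _
  have hnlam : (0 : ℝ) < n * lam := mul_pos hn' hlam
  -- cone condition
  have hcone : L1c ≤ 3 * L1S := by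
    by_contra hcon
    push_neg at hcon
    have hneg : n * lam * (3 * L1S - L1c) < 0 :=
      mul_neg_of_pos_of_neg hnlam (by linarith)
    linarith
  have hRE' := hRE Δ hcone
  -- κ * B ≤ 3 * lam * L1S
  have hκB : κ * B ≤ 3 * lam * L1S := by
    have h1 : (1 / (n : ℝ)) * A ≤ lam * (3 * L1S - L1c) := by
      have h4 : (1 / (n:ℝ)) * (n * lam * (3 * L1S - L1c)) = lam * (3 * L1S - L1c) := by
        field_simp
      calc (1 / (n:ℝ)) * A ≤ (1 / (n:ℝ)) * (n * lam * (3 * L1S - L1c)) :=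
            mul_le_mul_of_nonneg_left hA (by positivity)
        _ = lam * (3 * L1S - L1c) := h4
    have hL1c0 : 0 ≤ L1c := Finset.sum_nonneg fun j _ => norm_nonneg _
    have := hRE' ; rw [← hBdef, ← hAdef] at this
    have h5 : 0 ≤ lam * L1c := mul_nonneg hlam.le hL1c0
    nlinarith [this, h1, h5]
  -- Cauchy-Schwarz: L1S ≤ sqrt d * sqrt B
  have hB0 : 0 ≤ B := Finset.sum_nonneg fun j _ => sq_nonneg _
  have hL1S0 : 0 ≤ L1S := Finset.sum_nonneg fun j _ => norm_nonneg _
  have hCS : L1S ^ 2 ≤ d * B := by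
    have h1 : L1S ^ 2 ≤ (S.card : ℝ) * ∑ j ∈ S, ‖Δ j‖ ^ 2 := by
      rw [hL1Sdef]
      exact_mod_cast sq_sum_le_card_mul_sum_sq (s := S) (f := fun j => ‖Δ j‖)
    have h2 : ∑ j ∈ S, ‖Δ j‖ ^ 2 ≤ B := by
      rw [hBdef]
      exact Finset.sum_le_sum_of_subset_of_nonneg (Finset.filter_subset _ _)
        (fun j _ _ => sq_nonneg _)
    have h3 : (S.card : ℝ) ≤ d := by exact_mod_cast hsupp
    calc L1S ^ 2 ≤ (S.card : ℝ) * ∑ j ∈ S, ‖Δ j‖ ^ 2 := h1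
      _ ≤ (d : ℝ) * B :=
          mul_le_mul h3 h2 (Finset.sum_nonneg fun j _ => sq_nonneg _) (Nat.cast_nonneg d)
  have hL1Ssqrt : L1S ≤ Real.sqrt d * Real.sqrt B := by
    rw [← Real.sqrt_mul (Nat.cast_nonneg d)]
    calc L1S = Real.sqrt (L1S ^ 2) := (Real.sqrt_sq hL1S0).symm
      _ ≤ Real.sqrt (d * B) := Real.sqrt_le_sqrt hCS
  -- finish
  set t : ℝ := Real.sqrt B with htdef
  have ht0 : 0 ≤ t := Real.sqrt_nonneg _
  have htsq : t ^ 2 = B := Real.sq_sqrt hB0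
  have hfinal : κ * t ^ 2 ≤ 3 * lam * Real.sqrt d * t := by
    rw [htsq]
    calc κ * B ≤ 3 * lam * L1S := hκB
      _ ≤ 3 * lam * (Real.sqrt d * t) := by
          exact mul_le_mul_of_nonneg_left hL1Ssqrt (by linarith)
      _ = 3 * lam * Real.sqrt d * t := by ring
  show t ≤ (3 / κ) * lam * Real.sqrt d
  rcases eq_or_lt_of_le ht0 with h | h
  · rw [← h]
    positivity
  · have hκt : κ * t ≤ 3 * lam * Real.sqrt d := by
      refine le_of_mul_le_mul_right ?_ h
      calc κ * t * t = κ * t ^ 2 := by ring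
        _ ≤ 3 * lam * Real.sqrt d * t := hfinal
    rw [div_mul_eq_mul_div, div_mul_eq_mul_div, le_div_iff₀ hκ]
    linarith [hκt]
end

section
/- Let δ > 1, C > 0, and N a positive integer. Define B(k) = (1/N) ∑_{q=-(N-1)}^{N-1} (N − |q|) C δ^{-|q + kN|} for integers k ≠ 0. Then ∑_{k ∈ ℤ, k ≠ 0} B(k) ≤ 2 ∑_{k=1}^∞ B(k) and this sum converges with ∑_{k ∈ ℤ, k ≠ 0} B(k) ≤ 2C/(δ − 1). -/
open Finset

private lemma stmt8_Sbound (δ : ℝ) (hδ : 1 < δ) (N : ℕ) (hN : 0 < N) :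
    ∑ q ∈ Icc (-((N : ℤ) - 1)) ((N : ℤ) - 1), ((N : ℝ) - |q|) * δ ^ (-q)
      ≤ N * ∑ j ∈ range N, δ ^ j := by
  obtain ⟨M, rfl⟩ : ∃ M, N = M + 1 := ⟨N - 1, by omega⟩
  have hδ0 : (0:ℝ) < δ := by linarith
  have h1 : Icc (-((M+1 : ℤ) - 1)) ((M+1 : ℤ) - 1)
      = Ioc (-(M:ℤ)-1) (-1) ∪ Ioc (-1) ((M:ℤ)) := by
    rw [Finset.Ioc_union_Ioc_eq_Ioc (by omega) (by omega)]
    ext q; simp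
  have hdisj : Disjoint (Ioc (-(M:ℤ)-1) (-1)) (Ioc (-1) ((M:ℤ))) := by
    simp [Finset.disjoint_left]; omega
  have hcast : ((M+1 : ℕ) : ℤ) = (M : ℤ) + 1 := by push_cast; ring
  rw [hcast, h1, Finset.sum_union hdisj]
  have hneg : Ioc (-(M:ℤ)-1) (-1) = (range M).image (fun j : ℕ => -((j:ℤ)+1)) := by
    ext q; simp only [mem_Ioc, mem_image, mem_range]
    constructor
    · rintro ⟨h1, h2⟩; exact ⟨(-q-1).toNat, by omega, by omega⟩
    · rintro ⟨j, hj, rfl⟩; omega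
  have hpos : Ioc (-1:ℤ) ((M:ℤ)) = (range (M+1)).image (fun j : ℕ => (j:ℤ)) := by
    ext q; simp only [mem_Ioc, mem_image, mem_range]
    constructor
    · rintro ⟨h1, h2⟩; exact ⟨q.toNat, by omega, by omega⟩
    · rintro ⟨j, hj, rfl⟩; omega
  rw [hneg, hpos, Finset.sum_image (by intro a _ b _ h; beta_reduce at h; omega),
    Finset.sum_image (by intro a _ b _ h; beta_reduce at h; omega)]
  have e1 : ∀ j : ℕ, (((M+1:ℕ):ℝ) - |(-((j:ℤ)+1) : ℤ)|) * δ ^ (-(-((j:ℤ)+1)))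
      = (((M+1:ℕ):ℝ) - ((j:ℝ)+1)) * δ ^ (j+1) := by
    intro j
    rw [abs_of_nonpos (by omega), neg_neg, ← zpow_natCast δ (j+1)]
    push_cast
    ring_nf
  have e2 : ∀ j : ℕ, (((M+1:ℕ):ℝ) - |(j:ℤ)|) * δ ^ (-(j:ℤ))
      = (((M+1:ℕ):ℝ) - (j:ℝ)) * (δ ^ j)⁻¹ := by
    intro j
    rw [abs_of_nonneg (by omega), zpow_neg, zpow_natCast]
    push_cast; ring
  simp only [e1, e2]
  have hA : ∑ j ∈ range (M+1), (((M+1:ℕ):ℝ) - (j:ℝ)) * δ ^ j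
      = ∑ j ∈ range M, (((M+1:ℕ):ℝ) - ((j:ℝ)+1)) * δ ^ (j+1) + ((M:ℝ)+1) := by
    rw [Finset.sum_range_succ']
    push_cast
    ring_nf
    congr 1; apply Finset.sum_congr rfl; intro x _; ring
  have hrefl : ∑ j ∈ range (M+1), (((M+1:ℕ):ℝ) - (j:ℝ)) * (δ ^ j)⁻¹
      ≤ ∑ j ∈ range (M+1), ((j:ℝ) * δ ^ j + 1) := by
    rw [← Finset.sum_range_reflect (fun j => (((M+1:ℕ):ℝ) - (j:ℝ)) * (δ ^ j)⁻¹) (M+1)]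
    apply Finset.sum_le_sum
    intro j hj
    simp only [mem_range] at hj
    have hj' : j ≤ M := by omega
    rw [Nat.add_sub_cancel, Nat.cast_sub hj']
    have h1 : (δ ^ (M - j))⁻¹ ≤ 1 := by
      rw [inv_le_one_iff₀]; right; exact one_le_pow₀ (le_of_lt hδ)
    have h2 : (1:ℝ) ≤ δ ^ j := one_le_pow₀ (le_of_lt hδ)
    have h3 : (0:ℝ) ≤ (j:ℝ) := Nat.cast_nonneg j
    have h4 : (0:ℝ) < (δ ^ (M - j))⁻¹ := by positivity
    push_cast
    nlinarith
  have hsum1 : ∑ j ∈ range (M+1), ((j:ℝ) * δ ^ j + 1)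
      = ∑ j ∈ range (M+1), (j:ℝ) * δ ^ j + ((M:ℝ)+1) := by
    rw [Finset.sum_add_distrib, Finset.sum_const, Finset.card_range]
    push_cast; ring
  have hsum2 : ∑ j ∈ range (M+1), (((M+1:ℕ):ℝ) - (j:ℝ)) * δ ^ j
      + ∑ j ∈ range (M+1), (j:ℝ) * δ ^ j
      = ((M+1:ℕ):ℝ) * ∑ j ∈ range (M+1), δ ^ j := by
    rw [← Finset.sum_add_distrib, Finset.mul_sum]
    apply Finset.sum_congr rfl
    intro j _; ring
  push_cast at hA hrefl hsum1 hsum2 ⊢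
  linarith

theorem stmt_8 (δ C : ℝ) (hδ : 1 < δ) (hC : 0 < C) (N : ℕ) (hN : 0 < N)
    (B : ℤ → ℝ)
    (hB : ∀ k : ℤ, B k = (1 / N) * ∑ q ∈ Icc (-((N : ℤ) - 1)) ((N : ℤ) - 1),
      ((N : ℝ) - |q|) * C * δ ^ (-|q + k * N|)) :
    Summable (fun k : {k : ℤ // k ≠ 0} => B k.val) ∧
    (∑' k : {k : ℤ // k ≠ 0}, B k.val) ≤ 2 * ∑' k : ℕ, B ((k : ℤ) + 1) ∧
    (∑' k : {k : ℤ // k ≠ 0}, B k.val) ≤ 2 * C / (δ - 1) := by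
  have hδ0 : (0:ℝ) < δ := by linarith
  have hN0 : (0:ℝ) < (N:ℝ) := by exact_mod_cast hN
  set S : ℝ := ∑ q ∈ Icc (-((N : ℤ) - 1)) ((N : ℤ) - 1), ((N : ℝ) - |q|) * δ ^ (-q)
    with hSdef
  -- symmetry
  have hBsym : ∀ k : ℤ, B (-k) = B k := by
    intro k
    rw [hB, hB]
    congr 1
    apply Finset.sum_nbij' (i := fun q => -q) (j := fun q => -q)
    · intro a ha; simp only [mem_Icc] at *; omega
    · intro a ha; simp only [mem_Icc] at *; omega
    · intro a _; ring
    · intro a _; ring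
    · intro q _
      have h1 : |(-q : ℤ)| = |q| := abs_neg q
      have h2 : |(-q) + k * N| = |q + (-k) * N| := by
        rw [show (-q) + k * (N:ℤ) = -(q + (-k) * N) by ring, abs_neg]
      rw [h1, h2]
  -- formula for positive k
  have hBpos : ∀ k : ℤ, 1 ≤ k → B k = (1 / N) * (S * (C * δ ^ (-(k * N)))) := by
    intro k hk
    rw [hB, hSdef, Finset.sum_mul]
    congr 1
    apply Finset.sum_congr rfl
    intro q hq
    simp only [mem_Icc] at hq
    have hkN : (N:ℤ) ≤ k * N := le_mul_of_one_le_left (by positivity) hk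
    have habs : |q + k * N| = q + k * N := abs_of_nonneg (by omega)
    rw [habs, show -(q + k * (N:ℤ)) = -q + -(k * N) by ring, zpow_add₀ (ne_of_gt hδ0)]
    ring
  set r : ℝ := (δ ^ N)⁻¹ with hr
  have hδN : 1 < δ ^ N := one_lt_pow₀ hδ hN.ne'
  have hr0 : 0 ≤ r := by positivity
  have hr1 : r < 1 := by
    rw [hr, inv_lt_one_iff₀]; right; exact hδN
  have h1r : (0:ℝ) < 1 - r := by linarith
  set a : ℝ := 1 / N * (S * C) with ha
  have hg : ∀ n : ℕ, B ((n:ℤ) + 1) = (a * r) * r ^ n := by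
    intro n
    rw [hBpos ((n:ℤ)+1) (by omega)]
    have e : δ ^ (-(((n:ℤ)+1) * N)) = r ^ (n+1) := by
      rw [show (((n:ℤ)+1) * N) = (((n+1)*N : ℕ) : ℤ) by push_cast; ring,
        zpow_neg, zpow_natCast, mul_comm (n+1) N, pow_mul, hr, inv_pow]
    rw [e, ha, pow_succ]
    ring
  set s : ℝ := a * r * (1 - r)⁻¹ with hs
  have hgsum : HasSum (fun n : ℕ => B ((n:ℤ) + 1)) s := by
    have h := (hasSum_geometric_of_lt_one hr0 hr1).mul_left (a * r)
    rw [show (fun n : ℕ => B ((n:ℤ) + 1)) = fun n : ℕ => (a * r) * r ^ n from funext hg, hs]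
    exact h
  set F : ℤ → ℝ := fun k => if k = 0 then 0 else B k with hF
  have hF1 : HasSum (fun n : ℕ => F n) s := by
    have h0 : HasSum (fun n : ℕ => F ((n:ℕ) + 1)) s := by
      have e : (fun n : ℕ => F ((n:ℕ) + 1)) = fun n : ℕ => B ((n:ℤ) + 1) := by
        funext n
        have : ((n + 1 : ℕ) : ℤ) ≠ 0 := by omega
        simp only [hF]
        rw [if_neg (by exact_mod_cast this)]
        try push_cast
      rw [e]; exact hgsum
    have h := (hasSum_nat_add_iff (f := fun n : ℕ => F n) 1).mp h0
    simpa [hF] using h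
  have hF2 : HasSum (fun n : ℕ => F (-((n:ℤ) + 1))) s := by
    have e : (fun n : ℕ => F (-((n:ℤ) + 1))) = fun n : ℕ => B ((n:ℤ) + 1) := by
      funext n
      have hne : (-((n:ℤ) + 1)) ≠ 0 := by omega
      simp only [hF]
      rw [if_neg hne, hBsym ((n:ℤ) + 1)]
    rw [e]; exact hgsum
  have hFsum : HasSum F (s + s) := hF1.of_nat_of_neg_add_one hF2
  have hind : Set.indicator {k : ℤ | k ≠ 0} B = F := by
    funext k
    by_cases hk : k = 0 <;> simp [Set.indicator, hF, hk]
  have hsub : HasSum (fun k : {k : ℤ // k ≠ 0} => B k.val) (s + s) := by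
    exact (hasSum_subtype_iff_indicator (s := {k : ℤ | k ≠ 0})).mpr (hind ▸ hFsum)
  refine ⟨hsub.summable, ?_, ?_⟩
  · rw [hsub.tsum_eq, hgsum.tsum_eq]
    linarith
  · rw [hsub.tsum_eq]
    -- final numeric bound
    set G : ℝ := ∑ j ∈ range N, δ ^ j with hG
    have hSnn : 0 ≤ S := by
      rw [hSdef]
      apply Finset.sum_nonneg
      intro q hq
      simp only [mem_Icc] at hq
      have h1 : |q| ≤ (N:ℤ) := abs_le.mpr ⟨by omega, by omega⟩
      apply mul_nonneg
      · rw [sub_nonneg]; exact_mod_cast h1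
      · positivity
    have hSb : S ≤ N * G := stmt8_Sbound δ hδ N hN
    have hgs : G * (δ - 1) = δ ^ N - 1 := geom_sum_mul δ N
    have hGpos : 0 < G := by
      rw [hG]
      apply Finset.sum_pos (fun j _ => by positivity)
      exact Finset.nonempty_range_iff.mpr hN.ne'
    have hδ1 : (0:ℝ) < δ - 1 := by linarith
    have ha' : a ≤ C * G := by
      rw [ha]
      have h1 : S * C ≤ (N * G) * C := mul_le_mul_of_nonneg_right hSb hC.le
      calc 1 / (N:ℝ) * (S * C) ≤ 1 / (N:ℝ) * ((N * G) * C) := by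
            apply mul_le_mul_of_nonneg_left h1 (by positivity)
        _ = C * G := by field_simp
    have hde : C / (δ - 1) = (C * G) * r * (1 - r)⁻¹ := by
      have hδNpos : (0:ℝ) < δ ^ N := by positivity
      have hδN1 : (0:ℝ) < δ ^ N - 1 := by linarith
      rw [hr]
      rw [show (1 - (δ ^ N)⁻¹) = (δ ^ N - 1) / δ ^ N by field_simp]
      field_simp
      nlinarith [hgs]
    have key : s ≤ C / (δ - 1) := by
      rw [hs, hde]
      exact mul_le_mul_of_nonneg_right
        (mul_le_mul_of_nonneg_right ha' hr0) (by positivity)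
    have : 2 * C / (δ - 1) = C / (δ - 1) + C / (δ - 1) := by ring
    linarith
end

section
/- Let Φ̂ be a 2×2-block Hermitian matrix [[Φ̂_i, Φ̂_{i,ī}],[Φ̂_{ī,i}, Φ̂_{ī}]] (Φ̂_i scalar) satisfying ‖Φ̂ − Φ‖₂ ≤ 1/(2U), where Φ is Hermitian with eigenvalues in [1/U, 1/L], 0 < L ≤ U. Let W = Φ_{ī}^{-1}Φ_{ī,i} (defined from the blocks of Φ). Then the residual variance E := Φ̂_i − Φ̂_{i,ī}W − W^HΦ̂_{ī,i} + W^HΦ̂_{ī}W satisfies E ≤ 1/L + (1 + ‖W‖₂²)·(1/(2U)) ≤ 3/(2L). -/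
open Matrix
open scoped Matrix.Norms.L2Operator ComplexOrder

lemma sum_split {n : ℕ} (i : Fin n) {M : Type*} [AddCommMonoid M] (f : Fin n → M) :
    ∑ k, f k = f i + ∑ a : {j : Fin n // j ≠ i}, f a.val := by
  rw [Fintype.sum_eq_add_sum_compl i]
  congr 1
  exact (Finset.sum_subtype (p := fun j => j ≠ i) ({i}ᶜ)
    (fun x => by simp [Finset.mem_compl]) f)

lemma u_at {n : ℕ} (i : Fin n) (W : {j : Fin n // j ≠ i} → ℂ) (a : {j : Fin n // j ≠ i}) :
    (fun j => if h : j = i then (1:ℂ) else -W ⟨j, h⟩) a.val = -W a := by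
  simp [a.prop]

lemma u_at_i {n : ℕ} (i : Fin n) (W : {j : Fin n // j ≠ i} → ℂ) :
    (fun j => if h : j = i then (1:ℂ) else -W ⟨j, h⟩) i = 1 := by simp

lemma quad {n : ℕ} (i : Fin n) (W : {j : Fin n // j ≠ i} → ℂ)
    (M : Matrix (Fin n) (Fin n) ℂ) :
    star (fun j => if h : j = i then 1 else -W ⟨j, h⟩) ⬝ᵥ
      M.mulVec (fun j => if h : j = i then 1 else -W ⟨j, h⟩) =
    M i i - (fun a : {j : Fin n // j ≠ i} => M i a.val) ⬝ᵥ W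
      - star W ⬝ᵥ (fun a : {j : Fin n // j ≠ i} => M a.val i)
      + star W ⬝ᵥ (Matrix.of fun a b : {j : Fin n // j ≠ i} => M a.val b.val).mulVec W := by
  simp only [dotProduct, mulVec, Matrix.of_apply, Pi.star_apply]
  rw [sum_split i]
  simp_rw [sum_split i (fun k => M _ k * _)]
  simp only [u_at, u_at_i, dite_true, star_one, one_mul, mul_one, mul_neg, star_neg, neg_mul,
    neg_neg, neg_add, mul_add, Finset.sum_neg_distrib, Finset.sum_add_distrib, sub_eq_add_neg]
  ring

lemma x_at {n : ℕ} (i : Fin n) (x : {j : Fin n // j ≠ i} → ℂ) (a : {j : Fin n // j ≠ i}) :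
    (fun j => if h : j = i then (0:ℂ) else x ⟨j, h⟩) a.val = x a := by
  simp [a.prop]

lemma x_at_i {n : ℕ} (i : Fin n) (x : {j : Fin n // j ≠ i} → ℂ) :
    (fun j => if h : j = i then (0:ℂ) else x ⟨j, h⟩) i = 0 := by simp

lemma quad0 {n : ℕ} (i : Fin n) (x : {j : Fin n // j ≠ i} → ℂ)
    (M : Matrix (Fin n) (Fin n) ℂ) :
    star (fun j => if h : j = i then 0 else x ⟨j, h⟩) ⬝ᵥ
      M.mulVec (fun j => if h : j = i then 0 else x ⟨j, h⟩) =
    star x ⬝ᵥ (Matrix.of fun a b : {j : Fin n // j ≠ i} => M a.val b.val).mulVec x := by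
  simp only [dotProduct, mulVec, Matrix.of_apply, Pi.star_apply]
  rw [sum_split i]
  simp_rw [sum_split i (fun k => M _ k * _)]
  simp only [x_at, x_at_i, dite_true, star_zero, zero_mul, mul_zero, zero_add]

set_option maxHeartbeats 1000000 in
lemma dot_re_le {n : ℕ} (D : Matrix (Fin n) (Fin n) ℂ) (u : Fin n → ℂ) :
    (star u ⬝ᵥ D.mulVec u).re ≤ ‖D‖ * ∑ k, ‖u k‖ ^ 2 := by
  set u' : EuclideanSpace ℂ (Fin n) := (WithLp.equiv 2 _).symm u with hu'
  set w' : EuclideanSpace ℂ (Fin n) := (WithLp.equiv 2 _).symm (D.mulVec u) with hw'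
  have h1 : star u ⬝ᵥ D.mulVec u = inner ℂ u' w' := by
    exact dotProduct_comm _ _
  have h2 : ‖(inner ℂ u' w' : ℂ)‖ ≤ ‖u'‖ * ‖w'‖ := norm_inner_le_norm u' w'
  have h3 : ‖w'‖ ≤ ‖D‖ * ‖u'‖ := D.l2_opNorm_mulVec u'
  have h4 : ‖u'‖ * ‖u'‖ = ∑ k, ‖u k‖ ^ 2 := by
    have : ‖u'‖ = Real.sqrt (∑ k, ‖u k‖ ^ 2) := by
      simp only [hu', EuclideanSpace.norm_eq]; rfl
    rw [this, Real.mul_self_sqrt (by positivity)]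
  calc (star u ⬝ᵥ D.mulVec u).re = (inner ℂ u' w' : ℂ).re := by rw [h1]
    _ ≤ ‖(inner ℂ u' w' : ℂ)‖ := by exact Complex.re_le_norm _
    _ ≤ ‖u'‖ * ‖w'‖ := h2
    _ ≤ ‖u'‖ * (‖D‖ * ‖u'‖) := by
        exact mul_le_mul_of_nonneg_left h3 (norm_nonneg _)
    _ = ‖D‖ * (‖u'‖ * ‖u'‖) := by ring
    _ = ‖D‖ * ∑ k, ‖u k‖ ^ 2 := by rw [h4]

set_option maxHeartbeats 1000000 in
theorem stmt_16 (p : ℕ) (L U : ℝ) (hL : 0 < L) (hLU : L ≤ U)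
    (Φ Φhat : Matrix (Fin (p + 1)) (Fin (p + 1)) ℂ)
    (hΦ : Φ.PosDef) (hΦhat : Φhat.IsHermitian)
    (hmin : ∀ v : Fin (p + 1) → ℂ, (1 / U) * ∑ k, ‖v k‖ ^ 2 ≤ (star v ⬝ᵥ Φ.mulVec v).re)
    (hmax : ∀ v : Fin (p + 1) → ℂ, (star v ⬝ᵥ Φ.mulVec v).re ≤ (1 / L) * ∑ k, ‖v k‖ ^ 2)
    (hclose : ‖Φhat - Φ‖ ≤ 1 / (2 * U))
    (i : Fin (p + 1))
    (A : Matrix {j : Fin (p + 1) // j ≠ i} {j : Fin (p + 1) // j ≠ i} ℂ)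
    (hA : A = Matrix.of fun a b => Φ a.val b.val)
    (W : {j : Fin (p + 1) // j ≠ i} → ℂ)
    (hW : W = A⁻¹.mulVec (fun a => Φ a.val i))
    (Ahat : Matrix {j : Fin (p + 1) // j ≠ i} {j : Fin (p + 1) // j ≠ i} ℂ)
    (hAhat : Ahat = Matrix.of fun a b => Φhat a.val b.val)
    (E : ℝ)
    (hE : E = (Φhat i i - (fun a : {j : Fin (p + 1) // j ≠ i} => Φhat i a.val) ⬝ᵥ W
      - star W ⬝ᵥ (fun a : {j : Fin (p + 1) // j ≠ i} => Φhat a.val i)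
      + star W ⬝ᵥ Ahat.mulVec W).re) :
    E ≤ 1 / L + (1 + ∑ a, ‖W a‖ ^ 2) * (1 / (2 * U)) ∧
    1 / L + (1 + ∑ a, ‖W a‖ ^ 2) * (1 / (2 * U)) ≤ 3 / (2 * L) := by
  have hU : 0 < U := lt_of_lt_of_le hL hLU
  set u : Fin (p + 1) → ℂ := fun j => if h : j = i then 1 else -W ⟨j, h⟩ with hu
  -- A is positive definite
  have hApd : A.PosDef := by
    rw [posDef_iff_dotProduct_mulVec]
    constructor
    · rw [hA]
      ext a b
      simp only [conjTranspose_apply, Matrix.of_apply]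
      exact hΦ.1.apply _ _
    · intro x hx
      have hx' : (fun j => if h : j = i then (0:ℂ) else x ⟨j, h⟩) ≠ 0 := by
        intro h0
        apply hx
        funext a
        have h2 := congrFun h0 a.val
        rw [dif_neg a.prop] at h2
        simpa using h2
      have h := hΦ.dotProduct_mulVec_pos hx'
      rwa [quad0 i x Φ, ← hA] at h
  have hAW : A.mulVec W = fun a => Φ a.val i := by
    rw [hW, mulVec_mulVec, Matrix.mul_nonsing_inv _
      ((Matrix.isUnit_iff_isUnit_det _).mp hApd.isUnit), one_mulVec]
  set s : ℂ := star W ⬝ᵥ (fun a => Φ a.val i) with hs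
  have hs_eq : star W ⬝ᵥ A.mulVec W = s := by rw [hAW]
  have hs_nonneg : 0 ≤ s.re := by
    rw [← hs_eq]
    exact (Complex.nonneg_iff.mp (hApd.posSemidef.dotProduct_mulVec_nonneg W)).1
  have hrow : (fun a : {j : Fin (p + 1) // j ≠ i} => Φ i a.val) ⬝ᵥ W = star s := by
    rw [hs]
    simp only [dotProduct, star_sum, star_mul', star_star, Pi.star_apply]
    refine Finset.sum_congr rfl fun a _ => ?_
    rw [hΦ.1.apply, mul_comm]
  have hquadΦ : star u ⬝ᵥ Φ.mulVec u = Φ i i - star s := by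
    rw [hu, quad i W Φ, ← hA, hs_eq, hrow]
    ring
  have hΦii : (Φ i i).re ≤ 1 / L := by
    have h := hmax (Pi.single i 1)
    have h1 : star (Pi.single i 1 : Fin (p+1) → ℂ) ⬝ᵥ Φ.mulVec (Pi.single i 1) = Φ i i := by
      simp [dotProduct, mulVec, Pi.single_apply, apply_ite, Finset.mul_sum]
    have h2 : ∑ k, ‖(Pi.single i 1 : Fin (p+1) → ℂ) k‖ ^ 2 = 1 := by
      simp [Pi.single_apply, apply_ite]
    rw [h1, h2, mul_one] at h
    exact h
  have hΦu_le : (star u ⬝ᵥ Φ.mulVec u).re ≤ 1 / L := by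
    rw [hquadΦ]
    simp only [Complex.sub_re, Complex.star_def, Complex.conj_re]
    linarith
  have hS : (0:ℝ) ≤ 1 + ∑ a, ‖W a‖ ^ 2 := by positivity
  have hsum_u : ∑ k, ‖u k‖ ^ 2 = 1 + ∑ a, ‖W a‖ ^ 2 := by
    rw [sum_split i (fun k => ‖u k‖ ^ 2)]
    congr 1
    · have h1 : u i = 1 := u_at_i i W
      rw [h1]; simp
    · refine Finset.sum_congr rfl fun a _ => ?_
      have h2 : u a.val = -W a := u_at i W a
      rw [h2, norm_neg]
  have hEeq : E = (star u ⬝ᵥ Φhat.mulVec u).re := by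
    rw [hE, hu, quad i W Φhat, ← hAhat]
  have hsplitD : star u ⬝ᵥ Φhat.mulVec u = star u ⬝ᵥ Φ.mulVec u + star u ⬝ᵥ (Φhat - Φ).mulVec u := by
    rw [Matrix.sub_mulVec, dotProduct_sub]; ring
  have hDle : (star u ⬝ᵥ (Φhat - Φ).mulVec u).re ≤ (1 + ∑ a, ‖W a‖ ^ 2) * (1 / (2 * U)) := by
    calc (star u ⬝ᵥ (Φhat - Φ).mulVec u).re
        ≤ ‖Φhat - Φ‖ * ∑ k, ‖u k‖ ^ 2 := dot_re_le _ u
      _ = ‖Φhat - Φ‖ * (1 + ∑ a, ‖W a‖ ^ 2) := by rw [hsum_u]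
      _ ≤ (1 / (2 * U)) * (1 + ∑ a, ‖W a‖ ^ 2) := mul_le_mul_of_nonneg_right hclose hS
      _ = (1 + ∑ a, ‖W a‖ ^ 2) * (1 / (2 * U)) := mul_comm _ _
  constructor
  · have hre : (star u ⬝ᵥ Φhat.mulVec u).re
        = (star u ⬝ᵥ Φ.mulVec u).re + (star u ⬝ᵥ (Φhat - Φ).mulVec u).re := by
      rw [hsplitD, Complex.add_re]
    rw [hEeq, hre]
    linarith
  · have h1 := hmin u
    rw [hsum_u] at h1
    have h2 : 1 / U * (1 + ∑ a, ‖W a‖ ^ 2) ≤ 1 / L := le_trans h1 hΦu_le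
    have h3 : 3 / (2 * L) = 1 / L + (1/2) * (1 / L) := by ring
    have h4 : (1 + ∑ a, ‖W a‖ ^ 2) * (1 / (2 * U))
        = (1/2) * (1 / U * (1 + ∑ a, ‖W a‖ ^ 2)) := by
      field_simp
    rw [h3, h4]
    linarith
end
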